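/- Let X be a second countable, locally compact Hausdorff space and A a separable C*-algebra that is finite for projections. Let a be a positive element of C₀(X,A) such that for every x ∈ X the spectrum of a(x) is contained in {0} ∪ [δ, ∞) for some δ > 0 depending on x, and such that the Murray–von Neumann class of the support projection is locally constant: every x ∈ X has a neighbourhood V such that χ(a(y)) ~ χ(a(x)) for all y ∈ V. Then the map x ↦ χ(a(x)) is a continuous map from X to the projections of A. -/

import Mathlib

set_option maxHeartbeats 4000000
set_option synthInstance.maxHeartbeats 400000

open scoped ZeroAtInfty

/-- A projection in a C*-algebra: a self-adjoint idempotent. -/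
def IsProjectionElem {A : Type*} [Mul A] [Star A] (e : A) : Prop :=
  star e = e ∧ e * e = e

/-- Murray–von Neumann equivalence of projections. -/
def MvNEquiv {A : Type*} [Mul A] [Star A] (e f : A) : Prop :=
  ∃ v, star v * v = e ∧ v * star v = f

/-- `A` is finite for projections: `e ≤ f`, `e ~ f` implies `e = f` for projections. -/
def FiniteForProjections (A : Type*) [Mul A] [Star A] [PartialOrder A] : Prop :=
  ∀ e f : A, IsProjectionElem e → IsProjectionElem f → e ≤ f → MvNEquiv e f → e = f

/-- `e` is the support projection of `a`: a projection lying in the (non-unital)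
C*-subalgebra generated by `a` with `e * a = a`. -/
def IsSupportProjection {A : Type*} [NonUnitalCStarAlgebra A] (e a : A) : Prop :=
  IsProjectionElem e ∧ e * a = a ∧
    e ∈ closure ((NonUnitalStarAlgebra.adjoin ℂ {a} : NonUnitalStarSubalgebra ℂ A) : Set A)


section AuxA
variable {A : Type*} [NonUnitalCStarAlgebra A]

/-- A self-adjoint element acting as a left unit on a self-adjoint generator acts as a
two-sided unit on the closure of the star subalgebra it generates. -/
lemma unit_of_mem_closure {e c : A} (he : star e = e) (hc : star c = c) (hec : e * c = c)
    {b : A}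
    (hb : b ∈ closure ((NonUnitalStarAlgebra.adjoin ℂ {c} :
      NonUnitalStarSubalgebra ℂ A) : Set A)) :
    e * b = b ∧ b * e = b := by
  have hce : c * e = c := by
    have := congrArg star hec
    rwa [star_mul, he, hc] at this
  set S : Set A := {b : A | e * b = b ∧ b * e = b} with hS
  have hclosed : IsClosed S := by
    have h1 : IsClosed {b : A | e * b = b} :=
      isClosed_eq (continuous_const.mul continuous_id) continuous_id
    have h2 : IsClosed {b : A | b * e = b} :=
      isClosed_eq (continuous_id.mul continuous_const) continuous_id
    exact h1.inter h2
  have hsub : ((NonUnitalStarAlgebra.adjoin ℂ {c} :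
      NonUnitalStarSubalgebra ℂ A) : Set A) ⊆ S := by
    intro x hx
    induction hx using NonUnitalStarAlgebra.adjoin_induction with
    | mem x hx => simp only [Set.mem_singleton_iff] at hx; subst hx; exact ⟨hec, hce⟩
    | add x y hx hy px py => exact ⟨by rw [mul_add, px.1, py.1], by rw [add_mul, px.2, py.2]⟩
    | zero => exact ⟨mul_zero e, zero_mul e⟩
    | mul x y hx hy px py =>
        exact ⟨by rw [← mul_assoc, px.1], by rw [mul_assoc, py.2]⟩
    | smul r x hx px => exact ⟨by rw [mul_smul_comm, px.1], by rw [smul_mul_assoc, px.2]⟩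
    | star x hx px =>
        constructor
        · have := congrArg star px.2
          rwa [star_mul, he] at this
        · have := congrArg star px.1
          rwa [star_mul, he] at this
  exact closure_minimal hsub hclosed hb


lemma IsProjectionElem.norm_le_one {p : A} (hp : IsProjectionElem p) : ‖p‖ ≤ 1 := by
  have h := CStarRing.norm_star_mul_self (x := p)
  rw [hp.1, hp.2] at h
  nlinarith [norm_nonneg p]

lemma IsProjectionElem.eq_zero_of_norm_lt {p : A} (hp : IsProjectionElem p) (h : ‖p‖ < 1) :
    p = 0 := by
  have h' := CStarRing.norm_star_mul_self (x := p)
  rw [hp.1, hp.2] at h'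
  have : ‖p‖ = 0 := by nlinarith [norm_nonneg p]
  exact norm_eq_zero.mp this

lemma quasispectrum_quad_bound {c : A} (hc : IsSelfAdjoint c) {s : ℝ}
    (hs : s ∈ quasispectrum ℝ c) : |s * s - s| ≤ ‖c * c - c‖ := by
  have hcf : cfcₙ (fun s : ℝ => s * s - s) c = c * c - c := by
    rw [cfcₙ_sub (fun s : ℝ => s * s) (fun s : ℝ => s) c
        ((continuous_id.mul continuous_id).continuousOn) (by norm_num)
        continuous_id.continuousOn rfl,
      cfcₙ_mul (fun s : ℝ => s) (fun s : ℝ => s) c continuous_id.continuousOn rfl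
        continuous_id.continuousOn rfl, cfcₙ_id' ℝ c hc]
  calc |s * s - s| = ‖(fun s : ℝ => s * s - s) s‖ := (Real.norm_eq_abs _).symm
    _ ≤ ‖cfcₙ (fun s : ℝ => s * s - s) c‖ :=
        norm_apply_le_norm_cfcₙ (fun s : ℝ => s * s - s) c hs
          ((continuous_id.mul continuous_id).sub continuous_id).continuousOn (by norm_num) hc
    _ = ‖c * c - c‖ := by rw [hcf]

lemma quad_dichotomy {s cc : ℝ} (h : |s * s - s| ≤ cc) :
    |s| ≤ 2 * cc ∨ |s - 1| ≤ 2 * cc := by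
  by_contra hcon
  push_neg at hcon
  obtain ⟨h1, h2⟩ := hcon
  have hcc0 : 0 ≤ cc := le_trans (abs_nonneg _) h
  have hprod : |s| * |s - 1| ≤ cc := by
    rwa [show |s| * |s - 1| = |s * s - s| by rw [← abs_mul]; ring_nf]
  have hsum : 1 ≤ |s| + |s - 1| := by
    have h3 := abs_add_le s (1 - s)
    rw [show s + (1 - s) = (1 : ℝ) by ring, abs_one, abs_sub_comm (1 : ℝ) s] at h3
    linarith
  rcases le_total |s| (|s - 1|) with hle | hle
  · have hhalf : 1/2 ≤ |s - 1| := by linarith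
    have hs1 : 2 * cc * |s - 1| < |s| * |s - 1| :=
      mul_lt_mul_of_pos_right h1 (by linarith)
    have hs2 : 2 * cc * (1/2 : ℝ) ≤ 2 * cc * |s - 1| :=
      mul_le_mul_of_nonneg_left hhalf (by linarith)
    nlinarith
  · have hhalf : 1/2 ≤ |s| := by linarith
    have hs1 : |s| * (2 * cc) < |s| * |s - 1| :=
      mul_lt_mul_of_pos_left h2 (by linarith)
    have hs2 : (1/2 : ℝ) * (2 * cc) ≤ |s| * (2 * cc) :=
      mul_le_mul_of_nonneg_right hhalf (by linarith)
    nlinarith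

end AuxA

section AuxB
variable {A : Type*} [NonUnitalCStarAlgebra A]

open NonUnitalStarAlgebra in
lemma adjoin_real_subset_complex (c : A) :
    ((adjoin ℝ {c} : NonUnitalStarSubalgebra ℝ A) : Set A)
      ⊆ ((adjoin ℂ {c} : NonUnitalStarSubalgebra ℂ A) : Set A) := by
  intro x hx
  induction hx using adjoin_induction with
  | mem x hx => exact subset_adjoin ℂ _ hx
  | add x y _ _ px py => exact add_mem px py
  | zero => exact zero_mem _
  | mul x y _ _ px py => exact mul_mem px py
  | smul r x _ px =>
      rw [← algebraMap_smul ℂ r x]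
      exact SMulMemClass.smul_mem _ px
  | star x _ px => exact star_mem px

lemma cfcₙ_mem_closure_adjoin {c : A} (hc : IsSelfAdjoint c) (f : ℝ → ℝ)
    (hf : Continuous f) (h0 : f 0 = 0) :
    cfcₙ f c ∈ closure ((NonUnitalStarAlgebra.adjoin ℂ {c} :
      NonUnitalStarSubalgebra ℂ A) : Set A) := by
  have h0' : ((0 : quasispectrum ℝ c) : ℝ) = 0 := rfl
  have hdense := ContinuousMapZero.adjoin_id_dense (𝕜 := ℝ) (quasispectrum ℝ c)
  rw [cfcₙ_apply f c hf.continuousOn h0 hc]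
  set F : ContinuousMapZero (quasispectrum ℝ c) ℝ := ⟨⟨_, hf.continuousOn.restrict⟩, h0⟩
  have hF := hdense F
  have hcont : Continuous (cfcₙHom (R := ℝ) hc) := (cfcₙHom_isClosedEmbedding hc).continuous
  have hmap := (image_closure_subset_closure_image hcont) ⟨F, hF, rfl⟩
  have himg : (cfcₙHom (R := ℝ) hc) ''
      ((NonUnitalStarAlgebra.adjoin ℝ {ContinuousMapZero.id (quasispectrum ℝ c)} :
        NonUnitalStarSubalgebra ℝ _) : Set _)
      = ((NonUnitalStarAlgebra.adjoin ℝ {c} : NonUnitalStarSubalgebra ℝ A) : Set A) := by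
    rw [← NonUnitalStarSubalgebra.coe_map, NonUnitalStarAlgHom.map_adjoin_singleton]
    rw [show (cfcₙHom hc) (ContinuousMapZero.id (quasispectrum ℝ c)) = c from cfcₙHom_id hc]
  rw [himg] at hmap
  exact closure_mono (adjoin_real_subset_complex c) hmap

end AuxB

noncomputable def kfun (s : ℝ) : ℝ := min 1 (max 0 (3 * s - 1))

noncomputable def gfun (s : ℝ) : ℝ := kfun s / Real.sqrt (max s (1/2))

lemma kfun_continuous : Continuous kfun := by
  unfold kfun; fun_prop

lemma kfun_zero : kfun 0 = 0 := by norm_num [kfun]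

lemma kfun_nonneg (s : ℝ) : 0 ≤ kfun s := le_min (by norm_num) (le_max_left _ _)

lemma kfun_le_one (s : ℝ) : kfun s ≤ 1 := min_le_left _ _

lemma kfun_eq_zero {s : ℝ} (hs : s ≤ 1/3) : kfun s = 0 := by
  have : max 0 (3 * s - 1) = 0 := max_eq_left (by linarith)
  rw [kfun, this]
  norm_num

lemma kfun_eq_one {s : ℝ} (hs : 2/3 ≤ s) : kfun s = 1 := by
  have h1 : max 0 (3 * s - 1) = 3 * s - 1 := max_eq_right (by linarith)
  rw [kfun, h1]
  exact min_eq_left (by linarith)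

lemma sqrt_max_pos (s : ℝ) : 0 < Real.sqrt (max s (1/2)) :=
  Real.sqrt_pos.mpr (lt_of_lt_of_le (by norm_num) (le_max_right _ _))

lemma gfun_continuous : Continuous gfun := by
  apply kfun_continuous.div (Real.continuous_sqrt.comp (continuous_id.max continuous_const))
  exact fun s => (sqrt_max_pos s).ne'

lemma gfun_zero : gfun 0 = 0 := by rw [gfun, kfun_zero, zero_div]

lemma gfun_eq_zero {s : ℝ} (hs : s ≤ 1/3) : gfun s = 0 := by
  rw [gfun, kfun_eq_zero hs, zero_div]

lemma gfun_eq {s : ℝ} (hs : 2/3 ≤ s) : gfun s = 1 / Real.sqrt s := by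
  rw [gfun, kfun_eq_one hs, max_eq_left (by linarith : (1:ℝ)/2 ≤ s)]

lemma gfun_mul_self {s : ℝ} (hs : 2/3 ≤ s) : gfun s * gfun s = 1/s := by
  have hs0 : (0:ℝ) ≤ s := by linarith
  have hsq : Real.sqrt s * Real.sqrt s = s := Real.mul_self_sqrt hs0
  rw [gfun_eq hs, div_mul_div_comm, one_mul, hsq]

lemma gfun_mul_id_mul {s : ℝ} (hs : 2/3 ≤ s) : gfun s * s * gfun s = 1 := by
  have hs0 : (0:ℝ) < s := by linarith
  have hsq : Real.sqrt s * Real.sqrt s = s := Real.mul_self_sqrt hs0.le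
  have hne : Real.sqrt s ≠ 0 := by positivity
  rw [gfun_eq hs]
  field_simp
  exact (Real.sq_sqrt hs0.le).symm


section AuxC
variable {A : Type*} [NonUnitalCStarAlgebra A] [PartialOrder A] [StarOrderedRing A]

lemma mvn_of_close {p q : A} (hp : IsProjectionElem p) (hq : IsProjectionElem q)
    (hpq : ‖p - q‖ ≤ 1/9) : MvNEquiv p q := by
  obtain ⟨hps, hpp⟩ := hp
  obtain ⟨hqs, hqq⟩ := hq
  obtain ⟨c, hc_def⟩ : ∃ c : ℝ, c = ‖p - q‖ := ⟨_, rfl⟩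
  rw [← hc_def] at hpq
  have hc0 : 0 ≤ c := hc_def ▸ norm_nonneg _
  have hpn : ‖p‖ ≤ 1 := IsProjectionElem.norm_le_one ⟨hps, hpp⟩
  have hqn : ‖q‖ ≤ 1 := IsProjectionElem.norm_le_one ⟨hqs, hqq⟩
  obtain ⟨t, ht_def⟩ : ∃ t : A, t = p * q * p := ⟨_, rfl⟩
  have ht_sa : IsSelfAdjoint t := by
    rw [ht_def]
    simp only [IsSelfAdjoint, star_mul, hps, hqs, mul_assoc]
  have h_pt : p * t = t := by
    rw [ht_def, ← mul_assoc, ← mul_assoc, hpp]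
  have h_tp : t * p = t := by
    rw [ht_def, mul_assoc, mul_assoc, hpp, ← mul_assoc]
  have h_tn : ‖t‖ ≤ 1 := by
    have h1 : ‖p * q * p‖ ≤ ‖p * q‖ * ‖p‖ := norm_mul_le _ _
    have h2 : ‖p * q‖ ≤ ‖p‖ * ‖q‖ := norm_mul_le _ _
    rw [ht_def]
    nlinarith [norm_nonneg p, norm_nonneg q, norm_nonneg (p * q)]
  have h_tsubp : ‖t - p‖ ≤ c := by
    have heq : t - p = p * (q - p) * p := by
      rw [mul_sub, hpp, sub_mul, hpp, ht_def]
    have h1 : ‖p * (q - p) * p‖ ≤ ‖p * (q - p)‖ * ‖p‖ := norm_mul_le _ _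
    have h2 : ‖p * (q - p)‖ ≤ ‖p‖ * ‖q - p‖ := norm_mul_le _ _
    have h3 : ‖q - p‖ = c := by rw [hc_def, norm_sub_rev]
    rw [heq]
    nlinarith [norm_nonneg p, norm_nonneg (q - p), norm_nonneg (p * (q - p))]
  have h_quad : ‖t * t - t‖ ≤ c := by
    have heq : t * t - t = t * (t - p) := by rw [mul_sub, h_tp]
    have h1 : ‖t * (t - p)‖ ≤ ‖t‖ * ‖t - p‖ := norm_mul_le _ _
    rw [heq]
    nlinarith [norm_nonneg t, norm_nonneg (t - p)]
  have hdich : ∀ s ∈ quasispectrum ℝ t, |s| ≤ 2 * c ∨ |s - 1| ≤ 2 * c := by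
    intro s hs
    exact quad_dichotomy (le_trans (quasispectrum_quad_bound ht_sa hs) h_quad)
  have hc29 : 2 * c ≤ 2/9 := by linarith
  have hlow : ∀ s : ℝ, |s| ≤ 2 * c → s ≤ 1/3 := by
    intro s h
    have := abs_le.mp (h.trans hc29)
    linarith [this.1, this.2]
  have hhigh : ∀ s : ℝ, |s - 1| ≤ 2 * c → 2/3 ≤ s := by
    intro s h
    have := abs_le.mp (h.trans hc29)
    linarith [this.1, this.2]
  -- the projection e = cfcₙ kfun t
  obtain ⟨e, he_def⟩ : ∃ e : A, e = cfcₙ kfun t := ⟨_, rfl⟩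
  have he_sa : IsSelfAdjoint e := he_def ▸ cfcₙ_predicate kfun t
  have he_idem : e * e = e := by
    rw [he_def, ← cfcₙ_mul kfun kfun t kfun_continuous.continuousOn kfun_zero
      kfun_continuous.continuousOn kfun_zero]
    apply cfcₙ_congr
    intro s hs
    rcases hdich s hs with h | h
    · show kfun s * kfun s = kfun s
      rw [kfun_eq_zero (hlow s h)]; ring
    · show kfun s * kfun s = kfun s
      rw [kfun_eq_one (hhigh s h)]; ring
  have he_mem : e ∈ closure ((NonUnitalStarAlgebra.adjoin ℂ {t} :
      NonUnitalStarSubalgebra ℂ A) : Set A) :=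
    he_def ▸ cfcₙ_mem_closure_adjoin ht_sa kfun kfun_continuous kfun_zero
  have hpe : p * e = e ∧ e * p = e := unit_of_mem_closure hps ht_sa.star_eq h_pt he_mem
  have het : cfcₙ (fun s => kfun s * s) t = e * t := by
    rw [cfcₙ_mul kfun (fun s => s) t kfun_continuous.continuousOn kfun_zero
      continuous_id.continuousOn rfl, cfcₙ_id' ℝ t ht_sa, he_def]
  have hte : cfcₙ (fun s => s * kfun s) t = t * e := by
    rw [cfcₙ_mul (fun s => s) kfun t continuous_id.continuousOn rfl
      kfun_continuous.continuousOn kfun_zero, cfcₙ_id' ℝ t ht_sa, he_def]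
  have hete : cfcₙ (fun s => kfun s * s * kfun s) t = e * t * e := by
    rw [cfcₙ_mul (fun s => kfun s * s) kfun t
      (kfun_continuous.mul continuous_id).continuousOn (by simp [kfun_zero])
      kfun_continuous.continuousOn kfun_zero, het, ← he_def]
  -- r = p - e is a projection with small norm, hence zero
  have he_p : e = p := by
    obtain ⟨r, hr_def⟩ : ∃ r : A, r = p - e := ⟨_, rfl⟩
    have hr_star : star r = r := by rw [hr_def, star_sub, hps, he_sa.star_eq]
    have hr_idem : r * r = r := by
      rw [hr_def, sub_mul, mul_sub, mul_sub, hpp, hpe.1, hpe.2, he_idem]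
      abel
    have hrtr : r * t * r
        = cfcₙ (fun s => (s - kfun s * s) - (s * kfun s - kfun s * s * kfun s)) t := by
      have expand1 : r * t = t - e * t := by rw [hr_def, sub_mul, h_pt]
      have expand2 : r * t * r = (t - e * t) - (t * e - e * t * e) := by
        rw [expand1, hr_def, mul_sub, sub_mul, sub_mul, h_tp, mul_assoc e t p, h_tp]
      rw [expand2,
        cfcₙ_sub (fun s => s - kfun s * s) (fun s => s * kfun s - kfun s * s * kfun s) t
          (continuous_id.sub (kfun_continuous.mul continuous_id)).continuousOn
          (by simp [kfun_zero])
          ((continuous_id.mul kfun_continuous).sub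
            ((kfun_continuous.mul continuous_id).mul kfun_continuous)).continuousOn
          (by simp [kfun_zero]),
        cfcₙ_sub (fun s => s) (fun s => kfun s * s) t continuous_id.continuousOn rfl
          (kfun_continuous.mul continuous_id).continuousOn (by simp [kfun_zero]),
        cfcₙ_sub (fun s => s * kfun s) (fun s => kfun s * s * kfun s) t
          (continuous_id.mul kfun_continuous).continuousOn (by simp [kfun_zero])
          ((kfun_continuous.mul continuous_id).mul kfun_continuous).continuousOn
          (by simp [kfun_zero]),
        cfcₙ_id' ℝ t ht_sa, het, hte, hete]
    have hrtr_norm : ‖r * t * r‖ ≤ 2 * c := by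
      rw [hrtr]
      apply norm_cfcₙ_le
      intro s hs
      rw [Real.norm_eq_abs]
      rcases hdich s hs with h | h
      · have heq : (s - kfun s * s) - (s * kfun s - kfun s * s * kfun s)
            = s * (1 - kfun s)^2 := by ring
        rw [heq, abs_mul]
        have hb : |(1 - kfun s)^2| ≤ 1 := by
          rw [abs_of_nonneg (by positivity)]
          nlinarith [kfun_nonneg s, kfun_le_one s]
        nlinarith [abs_nonneg s, abs_nonneg ((1 - kfun s)^2)]
      · rw [kfun_eq_one (hhigh s h)]
        rw [show (s - 1 * s) - (s * 1 - 1 * s * 1) = (0:ℝ) by ring, abs_zero]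
        linarith
    have hrp : r * p = r := by rw [hr_def, sub_mul, hpp, hpe.2]
    have hrr : r = r * t * r + r * (p - t) * r := by
      have h1 : r * p * r = r := by rw [hrp, hr_idem]
      calc r = r * p * r := h1.symm
        _ = r * (t + (p - t)) * r := by rw [add_sub_cancel]
        _ = r * t * r + r * (p - t) * r := by rw [mul_add, add_mul]
    have hr_norm : ‖r‖ ≤ 1 := IsProjectionElem.norm_le_one ⟨hr_star, hr_idem⟩
    have hptn : ‖p - t‖ ≤ c := by rw [norm_sub_rev]; exact h_tsubp
    have hsecond : ‖r * (p - t) * r‖ ≤ c := by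
      have h1 : ‖r * (p - t) * r‖ ≤ ‖r * (p - t)‖ * ‖r‖ := norm_mul_le _ _
      have h2 : ‖r * (p - t)‖ ≤ ‖r‖ * ‖p - t‖ := norm_mul_le _ _
      nlinarith [norm_nonneg r, norm_nonneg (p - t), norm_nonneg (r * (p - t))]
    have hr0 : r = 0 := by
      apply IsProjectionElem.eq_zero_of_norm_lt ⟨hr_star, hr_idem⟩
      calc ‖r‖ = ‖r * t * r + r * (p - t) * r‖ := by rw [← hrr]
        _ ≤ ‖r * t * r‖ + ‖r * (p - t) * r‖ := norm_add_le _ _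
        _ ≤ 2 * c + c := add_le_add hrtr_norm hsecond
        _ < 1 := by linarith
    have := sub_eq_zero.mp (hr_def ▸ hr0)
    exact this.symm
  -- the partial isometry
  obtain ⟨G, hG_def⟩ : ∃ G : A, G = cfcₙ gfun t := ⟨_, rfl⟩
  have hG_sa : IsSelfAdjoint G := hG_def ▸ cfcₙ_predicate gfun t
  have hG_mem : G ∈ closure ((NonUnitalStarAlgebra.adjoin ℂ {t} :
      NonUnitalStarSubalgebra ℂ A) : Set A) :=
    hG_def ▸ cfcₙ_mem_closure_adjoin ht_sa gfun gfun_continuous gfun_zero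
  have hpG : p * G = G ∧ G * p = G := unit_of_mem_closure hps ht_sa.star_eq h_pt hG_mem
  have hGtG : G * t * G = e := by
    have hGt : cfcₙ (fun s => gfun s * s) t = G * t := by
      rw [cfcₙ_mul gfun (fun s => s) t gfun_continuous.continuousOn gfun_zero
        continuous_id.continuousOn rfl, cfcₙ_id' ℝ t ht_sa, hG_def]
    have hGtG' : cfcₙ (fun s => gfun s * s * gfun s) t = G * t * G := by
      rw [cfcₙ_mul (fun s => gfun s * s) gfun t
        (gfun_continuous.mul continuous_id).continuousOn (by simp [gfun_zero])
        gfun_continuous.continuousOn gfun_zero, hGt, ← hG_def]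
    rw [← hGtG', he_def]
    apply cfcₙ_congr
    intro s hs
    rcases hdich s hs with h | h
    · show gfun s * s * gfun s = kfun s
      rw [gfun_eq_zero (hlow s h), kfun_eq_zero (hlow s h)]; ring
    · show gfun s * s * gfun s = kfun s
      rw [gfun_mul_id_mul (hhigh s h), kfun_eq_one (hhigh s h)]
  obtain ⟨v, hv_def⟩ : ∃ v : A, v = q * p * G := ⟨_, rfl⟩
  have hv_star : star v = G * (p * q) := by
    rw [hv_def, star_mul, star_mul, hps, hqs, hG_sa.star_eq]
  have hvv : star v * v = p := by
    rw [hv_star, hv_def]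
    calc G * (p * q) * (q * p * G) = G * (p * (q * (q * (p * G)))) := by
          simp only [mul_assoc]
      _ = G * (p * (q * (p * G))) := by rw [← mul_assoc q q (p * G), hqq]
      _ = G * t * G := by rw [ht_def]; simp only [mul_assoc]
      _ = e := hGtG
      _ = p := he_p
  -- m = G * G
  obtain ⟨m, hm_def⟩ : ∃ m : A, m = cfcₙ (fun s => gfun s * gfun s) t := ⟨_, rfl⟩
  have hGG : G * G = m := by
    rw [hm_def, cfcₙ_mul gfun gfun t gfun_continuous.continuousOn gfun_zero
      gfun_continuous.continuousOn gfun_zero, hG_def]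
  have hm_mem : m ∈ closure ((NonUnitalStarAlgebra.adjoin ℂ {t} :
      NonUnitalStarSubalgebra ℂ A) : Set A) :=
    hm_def ▸ cfcₙ_mem_closure_adjoin ht_sa _ (gfun_continuous.mul gfun_continuous)
      (by simp [gfun_zero])
  have hpm : p * m = m ∧ m * p = m := unit_of_mem_closure hps ht_sa.star_eq h_pt hm_mem
  have hvv' : v * star v = q * (m * q) := by
    rw [hv_star, hv_def]
    calc q * p * G * (G * (p * q)) = q * (p * (G * (G * (p * q)))) := by
          simp only [mul_assoc]
      _ = q * (p * (m * (p * q))) := by rw [← mul_assoc G G (p * q), hGG]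
      _ = q * (p * (m * p) * q) := by simp only [mul_assoc]
      _ = q * (m * q) := by rw [hpm.2, hpm.1]
  -- f' = v * star v equals q
  have hf'q : v * star v = q := by
    obtain ⟨f', hf'_def⟩ : ∃ f' : A, f' = v * star v := ⟨_, rfl⟩
    have hf'_star : star f' = f' := by rw [hf'_def, star_mul, star_star]
    have hvp : v * p = v := by
      rw [hv_def, mul_assoc (q * p) G p, hpG.2]
    have hpv' : p * star v = star v := by
      rw [hv_star, ← mul_assoc, hpG.1]
    have hf'_idem : f' * f' = f' := by
      rw [hf'_def]
      calc v * star v * (v * star v) = v * (star v * v) * star v := by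
            simp only [mul_assoc]
        _ = v * p * star v := by rw [hvv]
        _ = v * star v := by rw [hvp]
    have hqf' : q * f' = f' ∧ f' * q = f' := by
      constructor
      · rw [hf'_def, hvv', ← mul_assoc, hqq]
      · rw [hf'_def, hvv']
        calc q * (m * q) * q = q * (m * (q * q)) := by simp only [mul_assoc]
          _ = q * (m * q) := by rw [hqq]
    obtain ⟨r', hr'_def⟩ : ∃ r' : A, r' = q - f' := ⟨_, rfl⟩
    have hr'_star : star r' = r' := by rw [hr'_def, star_sub, hqs, hf'_star]
    have hr'_idem : r' * r' = r' := by
      rw [hr'_def, sub_mul, mul_sub, mul_sub, hqq, hqf'.1, hqf'.2, hf'_idem]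
      abel
    have hpm_norm : ‖p - m‖ ≤ 3 * c := by
      have hpe' : p - m = cfcₙ (fun s => kfun s - gfun s * gfun s) t := by
        rw [cfcₙ_sub kfun (fun s => gfun s * gfun s) t kfun_continuous.continuousOn kfun_zero
          (gfun_continuous.mul gfun_continuous).continuousOn (by simp [gfun_zero]),
          ← he_def, ← hm_def, he_p]
      rw [hpe']
      apply norm_cfcₙ_le
      intro s hs
      rw [Real.norm_eq_abs]
      rcases hdich s hs with h | h
      · rw [kfun_eq_zero (hlow s h), gfun_eq_zero (hlow s h)]
        norm_num
        linarith
      · have hs23 : 2/3 ≤ s := hhigh s h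
        have hs0 : (0:ℝ) < s := by linarith
        rw [kfun_eq_one hs23, gfun_mul_self hs23]
        have habs := abs_le.mp h
        rw [show (1 : ℝ) - 1/s = (s - 1)/s by field_simp, abs_div, abs_of_pos hs0,
          div_le_iff₀ hs0]
        nlinarith [habs.1, habs.2, mul_nonneg hc0 (by linarith : (0:ℝ) ≤ 3*s - 2)]
    have hr'_norm : ‖r'‖ ≤ 4 * c := by
      have heq : r' = q * ((q - m) * q) := by
        rw [hr'_def, hf'_def, hvv', sub_mul, hqq, mul_sub, hqq]
      have h1 : ‖q * ((q - m) * q)‖ ≤ ‖q‖ * ‖(q - m) * q‖ := norm_mul_le _ _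
      have h2 : ‖(q - m) * q‖ ≤ ‖q - m‖ * ‖q‖ := norm_mul_le _ _
      have h3 : ‖q - m‖ ≤ 4 * c := by
        have h4 : ‖q - p‖ = c := by rw [norm_sub_rev, ← hc_def]
        calc ‖q - m‖ = ‖(q - p) + (p - m)‖ := by rw [sub_add_sub_cancel]
          _ ≤ ‖q - p‖ + ‖p - m‖ := norm_add_le _ _
          _ ≤ c + 3 * c := add_le_add (le_of_eq h4) hpm_norm
          _ = 4 * c := by ring
      rw [heq]
      nlinarith [norm_nonneg q, norm_nonneg (q - m), norm_nonneg ((q - m) * q)]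
    have hr'0 : r' = 0 := by
      apply IsProjectionElem.eq_zero_of_norm_lt ⟨hr'_star, hr'_idem⟩
      calc ‖r'‖ ≤ 4 * c := hr'_norm
        _ < 1 := by linarith
    rw [← hf'_def]
    exact (sub_eq_zero.mp (hr'_def ▸ hr'0)).symm
  exact ⟨v, hvv, hf'q⟩

end AuxC

section MvNBasic
variable {A : Type*} [NonUnitalCStarAlgebra A]

lemma MvNEquiv.symm' {e f : A} (h : MvNEquiv e f) : MvNEquiv f e := by
  obtain ⟨v, h1, h2⟩ := h
  exact ⟨star v, by rw [star_star, h2], by rw [star_star, h1]⟩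

lemma MvNEquiv.trans' {e f g : A} (he : e * e = e) (hg : g * g = g)
    (h1 : MvNEquiv e f) (h2 : MvNEquiv f g) : MvNEquiv e g := by
  obtain ⟨v, hv1, hv2⟩ := h1
  obtain ⟨w, hw1, hw2⟩ := h2
  refine ⟨w * v, ?_, ?_⟩
  · have h3 : star (w * v) * (w * v) = star v * ((star w * w) * v) := by
      rw [star_mul]; simp only [mul_assoc]
    rw [h3, hw1, ← hv2]
    calc star v * (v * star v * v) = (star v * v) * (star v * v) := by simp only [mul_assoc]
      _ = e := by rw [hv1, he]
  · have h3 : (w * v) * star (w * v) = w * ((v * star v) * star w) := by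
      rw [star_mul]; simp only [mul_assoc]
    rw [h3, hv2, ← hw1]
    calc w * ((star w * w) * star w) = (w * star w) * (w * star w) := by simp only [mul_assoc]
      _ = g := by rw [hw2, hg]

lemma support_projection_unique {a e₁ e₂ : A} (ha : star a = a)
    (h1 : IsSupportProjection e₁ a) (h2 : IsSupportProjection e₂ a) : e₁ = e₂ := by
  obtain ⟨⟨h1s, _⟩, h1a, h1m⟩ := h1
  obtain ⟨⟨h2s, _⟩, h2a, h2m⟩ := h2
  have hA := unit_of_mem_closure h1s ha h1a h2m
  have hB := unit_of_mem_closure h2s ha h2a h1m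
  exact hB.1.symm.trans hA.2

end MvNBasic

section Eval
variable {X : Type*} [TopologicalSpace X] {A : Type*} [NonUnitalCStarAlgebra A]

/-- Evaluation at a point as a non-unital star algebra homomorphism on `C₀(X, A)`. -/
def evalHomC0 (y : X) : C₀(X, A) →⋆ₙₐ[ℂ] A where
  toFun g := g y
  map_smul' r g := rfl
  map_zero' := rfl
  map_add' g h := rfl
  map_mul' g h := rfl
  map_star' g := rfl

lemma evalHomC0_continuous (y : X) : Continuous (evalHomC0 (A := A) y) := by
  have h : ⇑(evalHomC0 (A := A) y) = (fun g : BoundedContinuousFunction X A => g y) ∘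
      (ZeroAtInftyContinuousMap.toBCF : C₀(X, A) → BoundedContinuousFunction X A) := rfl
  rw [h]
  exact (continuous_eval_const y).comp
    ZeroAtInftyContinuousMap.isometry_toBCF.continuous

end Eval


/-- If `a` is a positive element of `C₀(X, A)` (`X` second countable locally compact
Hausdorff, `A` separable and finite for projections) whose values have spectrum in
`{0} ∪ [δ, ∞)` and whose support projections `P x = χ(a(x))` have locally constant
Murray–von Neumann class, then `P` is continuous. -/
theorem stmt_5 {X : Type*} [TopologicalSpace X] [SecondCountableTopology X]
    [LocallyCompactSpace X] [T2Space X]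
    {A : Type*} [NonUnitalCStarAlgebra A] [PartialOrder A] [StarOrderedRing A]
    [TopologicalSpace.SeparableSpace A]
    (hfin : FiniteForProjections A)
    (a : C₀(X, A)) (ha : ∀ x, 0 ≤ a x)
    (hspec : ∀ x, ∃ δ > (0 : ℝ), quasispectrum ℝ (a x) ⊆ {0} ∪ Set.Ici δ)
    (P : X → A) (hP : ∀ x, IsSupportProjection (P x) (a x))
    (hloc : ∀ x, ∃ V ∈ nhds x, ∀ y ∈ V, MvNEquiv (P y) (P x)) :
    Continuous P := by
  have ha_sa : ∀ y, IsSelfAdjoint (a y) := fun y => IsSelfAdjoint.of_nonneg (ha y)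
  have haC : IsSelfAdjoint a := by
    rw [IsSelfAdjoint]
    ext y
    rw [ZeroAtInftyContinuousMap.star_apply]
    exact (ha_sa y).star_eq
  rw [continuous_iff_continuousAt]
  intro x₀
  obtain ⟨δ, hδ, hδspec⟩ := hspec x₀
  obtain ⟨V, hV, hVmvn⟩ := hloc x₀
  -- the cut-off function
  obtain ⟨f, hfc, hf0, hf01, hf1⟩ : ∃ f : ℝ → ℝ, Continuous f ∧ f 0 = 0 ∧
      (∀ s, 0 ≤ f s ∧ f s ≤ 1) ∧ ∀ s, δ ≤ s → f s = 1 := by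
    refine ⟨fun s => min 1 (max 0 (2/δ * s - 1)), by fun_prop, by norm_num,
      fun s => ⟨le_min (by norm_num) (le_max_left _ _), min_le_left _ _⟩, fun s hs => ?_⟩
    have h2 : (2:ℝ) ≤ 2/δ * s := by
      rw [div_mul_eq_mul_div, le_div_iff₀ hδ]
      nlinarith
    show min 1 (max 0 (2/δ * s - 1)) = 1
    rw [max_eq_right (by linarith), min_eq_left (by linarith)]
  -- the global cfc element
  obtain ⟨b, hb_def⟩ : ∃ b : C₀(X, A), b = cfcₙ f a := ⟨_, rfl⟩
  have hb_eval : ∀ y, b y = cfcₙ f (a y) := by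
    intro y
    have := NonUnitalStarAlgHomClass.map_cfcₙ (R := ℝ) (S := ℂ)
      (evalHomC0 (A := A) y) f a hfc.continuousOn hf0 (evalHomC0_continuous y) haC (ha_sa y)
    rw [hb_def]
    exact this
  -- P x₀ agrees with the cfc projection
  have hPx₀ : P x₀ = b x₀ := by
    rw [hb_eval x₀]
    refine support_projection_unique (ha_sa x₀).star_eq (hP x₀) ⟨⟨?_, ?_⟩, ?_, ?_⟩
    · exact (cfcₙ_predicate f (a x₀) : IsSelfAdjoint _).star_eq
    · rw [← cfcₙ_mul f f (a x₀) hfc.continuousOn hf0 hfc.continuousOn hf0]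
      apply cfcₙ_congr
      intro s hs
      show f s * f s = f s
      rcases hδspec hs with h | h
      · rw [Set.mem_singleton_iff] at h; subst h; rw [hf0]; ring
      · rw [hf1 s h]; ring
    · have h1 : cfcₙ (fun s => f s * s) (a x₀) = cfcₙ f (a x₀) * (a x₀) := by
        rw [cfcₙ_mul f (fun s => s) (a x₀) hfc.continuousOn hf0
          continuous_id.continuousOn rfl, cfcₙ_id' ℝ (a x₀) (ha_sa x₀)]
      have h2 : cfcₙ (fun s => f s * s) (a x₀) = cfcₙ (fun s : ℝ => s) (a x₀) := by
        apply cfcₙ_congr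
        intro s hs
        show f s * s = s
        rcases hδspec hs with h | h
        · rw [Set.mem_singleton_iff] at h; subst h; ring
        · rw [hf1 s h]; ring
      rw [← h1, h2, cfcₙ_id' ℝ (a x₀) (ha_sa x₀)]
    · exact cfcₙ_mem_closure_adjoin (ha_sa x₀) f hfc hf0
  -- quantitative setup
  rw [ContinuousAt, Metric.tendsto_nhds]
  intro ε hε
  obtain ⟨ε', hε'0, hε'ε, hε'small⟩ : ∃ ε' : ℝ, 0 < ε' ∧ 7 * ε' < ε ∧ ε' ≤ 1/63 :=
    ⟨min (ε/8) (1/63), lt_min (by linarith) (by norm_num),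
      by have := min_le_left (ε/8) (1/63); linarith,
      min_le_right _ _⟩
  have hb_cont : Continuous fun y => b y := map_continuous b.toBCF |>.congr (fun y => rfl)
  have hev1 : ∀ᶠ y in nhds x₀, ‖b y - b x₀‖ < ε' := by
    have := Metric.tendsto_nhds.mp (hb_cont.continuousAt (x := x₀)) ε' hε'0
    filter_upwards [this] with y hy
    rwa [dist_eq_norm] at hy
  have hev2 : ∀ᶠ y in nhds x₀, MvNEquiv (P y) (P x₀) :=
    Filter.eventually_of_mem hV hVmvn
  filter_upwards [hev1, hev2] with y hy1 hy2
  -- now the pointwise argument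
  obtain ⟨hp_proj, hpa, hpmem⟩ := hP x₀
  obtain ⟨hPy_proj, hPya, hPymem⟩ := hP y
  have hp_norm : ‖P x₀‖ ≤ 1 := by
    have h := CStarRing.norm_star_mul_self (x := P x₀)
    rw [hp_proj.1, hp_proj.2] at h
    nlinarith [norm_nonneg (P x₀)]
  have hby_sa : IsSelfAdjoint (b y) := by
    rw [hb_eval y]; exact cfcₙ_predicate f (a y)
  have hby_norm : ‖b y‖ ≤ 1 := by
    rw [hb_eval y]
    apply norm_cfcₙ_le
    intro s _
    rw [Real.norm_eq_abs, abs_of_nonneg (hf01 s).1]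
    exact (hf01 s).2
  have hclose : ‖b y - P x₀‖ < ε' := by rwa [← hPx₀] at hy1
  -- b y is approximately idempotent
  have hquad : ‖b y * b y - b y‖ ≤ 3 * ε' := by
    have hkey : b y * b y - b y
        = b y * (b y - P x₀) + ((b y - P x₀) * P x₀ + (P x₀ - b y)) := by
      rw [mul_sub, sub_mul, hp_proj.2]
      abel
    have h1 : ‖b y * (b y - P x₀)‖ ≤ ‖b y‖ * ‖b y - P x₀‖ := norm_mul_le _ _
    have h2 : ‖(b y - P x₀) * P x₀‖ ≤ ‖b y - P x₀‖ * ‖P x₀‖ := norm_mul_le _ _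
    have h3 : ‖P x₀ - b y‖ = ‖b y - P x₀‖ := norm_sub_rev _ _
    calc ‖b y * b y - b y‖
        ≤ ‖b y * (b y - P x₀)‖ + ‖(b y - P x₀) * P x₀ + (P x₀ - b y)‖ := by
          rw [hkey]; exact norm_add_le _ _
      _ ≤ ‖b y * (b y - P x₀)‖ + (‖(b y - P x₀) * P x₀‖ + ‖P x₀ - b y‖) := by
          gcongr
          exact norm_add_le _ _
      _ ≤ 3 * ε' := by
          rw [h3]
          nlinarith [norm_nonneg (b y), norm_nonneg (b y - P x₀), norm_nonneg (P x₀),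
            hclose.le]
  have hdich : ∀ s ∈ quasispectrum ℝ (b y), |s| ≤ 6 * ε' ∨ |s - 1| ≤ 6 * ε' := by
    intro s hs
    have := quad_dichotomy (le_trans (quasispectrum_quad_bound hby_sa hs) hquad)
    rcases this with h | h
    · left; linarith
    · right; linarith
  have hlow : ∀ s : ℝ, |s| ≤ 6 * ε' → s ≤ 1/3 := by
    intro s h
    have := abs_le.mp h
    linarith [this.1, this.2]
  have hhigh : ∀ s : ℝ, |s - 1| ≤ 6 * ε' → 2/3 ≤ s := by
    intro s h
    have := abs_le.mp h
    linarith [this.1, this.2]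
  -- the projection q
  obtain ⟨q, hq_def⟩ : ∃ q : A, q = cfcₙ kfun (b y) := ⟨_, rfl⟩
  have hq_sa : IsSelfAdjoint q := hq_def ▸ cfcₙ_predicate kfun (b y)
  have hq_idem : q * q = q := by
    rw [hq_def, ← cfcₙ_mul kfun kfun (b y) kfun_continuous.continuousOn kfun_zero
      kfun_continuous.continuousOn kfun_zero]
    apply cfcₙ_congr
    intro s hs
    show kfun s * kfun s = kfun s
    rcases hdich s hs with h | h
    · rw [kfun_eq_zero (hlow s h)]; ring
    · rw [kfun_eq_one (hhigh s h)]; ring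
  have hq_proj : IsProjectionElem q := ⟨hq_sa.star_eq, hq_idem⟩
  have hq_close : ‖q - b y‖ ≤ 6 * ε' := by
    have heq : q - b y = cfcₙ (fun s => kfun s - s) (b y) := by
      rw [cfcₙ_sub kfun (fun s : ℝ => s) (b y) kfun_continuous.continuousOn kfun_zero
        continuous_id.continuousOn rfl, cfcₙ_id' ℝ (b y) hby_sa, hq_def]
    rw [heq]
    apply norm_cfcₙ_le
    intro s hs
    rw [Real.norm_eq_abs]
    rcases hdich s hs with h | h
    · rw [kfun_eq_zero (hlow s h), zero_sub, abs_neg]; exact h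
    · rw [kfun_eq_one (hhigh s h)]
      rw [abs_sub_comm] at h
      exact h
  -- q lies in the hereditary algebra of a y
  have hq_mem : q ∈ closure ((NonUnitalStarAlgebra.adjoin ℂ {a y} :
      NonUnitalStarSubalgebra ℂ A) : Set A) := by
    have hcomp : cfcₙ (kfun ∘ f) (a y) = cfcₙ kfun (cfcₙ f (a y)) :=
      cfcₙ_comp kfun f (a y) (kfun_continuous.continuousOn) kfun_zero
        hfc.continuousOn hf0 (ha_sa y)
    rw [hq_def, hb_eval y, ← hcomp]
    exact cfcₙ_mem_closure_adjoin (ha_sa y) _ (kfun_continuous.comp hfc)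
      (by simp [hf0, kfun_zero])
  have hPyq : P y * q = q ∧ q * P y = q :=
    unit_of_mem_closure hPy_proj.1 (ha_sa y).star_eq hPya hq_mem
  have hq_le : q ≤ P y := by
    have hsq : (P y - q) = star (P y - q) * (P y - q) := by
      rw [star_sub, hPy_proj.1, hq_sa.star_eq, sub_mul, mul_sub, mul_sub,
        hPy_proj.2, hPyq.1, hPyq.2, hq_idem]
      abel
    have : 0 ≤ P y - q := hsq ▸ star_mul_self_nonneg (P y - q)
    exact sub_nonneg.mp this
  have hqp_close : ‖q - P x₀‖ ≤ 7 * ε' := by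
    calc ‖q - P x₀‖ = ‖(q - b y) + (b y - P x₀)‖ := by rw [sub_add_sub_cancel]
      _ ≤ ‖q - b y‖ + ‖b y - P x₀‖ := norm_add_le _ _
      _ ≤ 6 * ε' + ε' := add_le_add hq_close hclose.le
      _ = 7 * ε' := by ring
  have hmvn_qp : MvNEquiv q (P x₀) := by
    apply mvn_of_close hq_proj hp_proj
    calc ‖q - P x₀‖ ≤ 7 * ε' := hqp_close
      _ ≤ 1/9 := by linarith
  have hmvn_qPy : MvNEquiv q (P y) :=
    MvNEquiv.trans' hq_idem hPy_proj.2 hmvn_qp hy2.symm'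
  have hq_eq : q = P y := hfin q (P y) hq_proj hPy_proj hq_le hmvn_qPy
  rw [dist_eq_norm, ← hq_eq]
  calc ‖q - P x₀‖ ≤ 7 * ε' := hqp_close
    _ < ε := hε'ε
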